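/- Define S_n = sum_{k=0}^{n-3} (-1)^k * C(2k,k) * C(n-3,k) * C(k, n-k-3) for n >= 3 (and S_n = 0 for n < 3). Then for every positive integer n, n divides S_{n+2} + 12*S_{n+1} + 16*S_n. -/
import Mathlib


open Finset

/-- `S n = ∑_{k=0}^{n-3} (-1)^k C(2k,k) C(n-3,k) C(k, n-k-3)`, with `S n = 0` for `n < 3`. -/
def S (n : ℕ) : ℤ :=
  ∑ k ∈ Finset.range (n - 2),
    (-1) ^ k * ((2 * k).choose k : ℤ) * ((n - 3).choose k : ℤ) * (k.choose (n - k - 3) : ℤ)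

namespace Stmt11Aux

/-- Truncated integer binomial coefficient: `Bi a b = C(a,b)` when `0 ≤ b ≤ a`, else `0`. -/
def Bi (a b : ℤ) : ℤ := if 0 ≤ b ∧ b ≤ a then ((a.toNat).choose b.toNat : ℤ) else 0

lemma Bi_of_not {a b : ℤ} (h : ¬(0 ≤ b ∧ b ≤ a)) : Bi a b = 0 := if_neg h

lemma Bi_nat (A B : ℕ) : Bi (A : ℤ) (B : ℤ) = (A.choose B : ℤ) := by
  unfold Bi
  split_ifs with h
  · simp
  · have : A.choose B = 0 := Nat.choose_eq_zero_of_lt (by omega)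
    simp [this]

lemma natlower (A B : ℕ) :
    ((A : ℤ) - B) * (A.choose B : ℤ) = ((B : ℤ) + 1) * (A.choose (B + 1) : ℤ) := by
  rcases le_or_gt (B + 1) A with h | h
  · have h2 : B ≤ A := by omega
    have h3 := Nat.choose_succ_right_eq A B
    zify [h2] at h3
    linarith
  · have h1 : A.choose (B + 1) = 0 := Nat.choose_eq_zero_of_lt (by omega)
    rw [h1]
    rcases eq_or_lt_of_le (show A ≤ B by omega) with h2 | h2
    · subst h2; push_cast; ring
    · rw [Nat.choose_eq_zero_of_lt h2]; push_cast; ring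

lemma natupper (A B : ℕ) :
    ((A : ℤ) - B) * (A.choose B : ℤ) = (A : ℤ) * ((A - 1).choose B : ℤ) := by
  cases A with
  | zero =>
    cases B with
    | zero => simp
    | succ B => simp [Nat.choose_eq_zero_of_lt]
  | succ A' =>
    have h1 := natlower (A' + 1) B
    have h2 := Nat.add_one_mul_choose_eq A' B
    have h3 : A' + 1 - 1 = A' := rfl
    rw [h3]
    zify at h2
    push_cast at h1 h2 ⊢
    linear_combination h1 - h2

lemma Bi_lower (a b : ℤ) : (a - b) * Bi a b = (b + 1) * Bi a (b + 1) := by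
  rcases lt_or_ge a 0 with ha | ha
  · rw [Bi_of_not (by omega), Bi_of_not (by omega)]; ring
  · obtain ⟨A, rfl⟩ : ∃ A : ℕ, a = (A : ℤ) := ⟨a.toNat, (Int.toNat_of_nonneg ha).symm⟩
    rcases lt_or_ge b 0 with hb | hb
    · rcases eq_or_lt_of_le (show b ≤ -1 by omega) with h1 | h1
      · rw [h1, Bi_of_not (by omega)]; norm_num
      · rw [Bi_of_not (by omega), Bi_of_not (by omega)]; ring
    · obtain ⟨B, rfl⟩ : ∃ B : ℕ, b = (B : ℤ) := ⟨b.toNat, (Int.toNat_of_nonneg hb).symm⟩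
      rw [show ((B : ℤ) + 1) = ((B + 1 : ℕ) : ℤ) by push_cast; ring, Bi_nat, Bi_nat]
      have := natlower A B
      push_cast at this ⊢
      linarith

lemma Bi_upper (a b : ℤ) : (a - b) * Bi a b = a * Bi (a - 1) b := by
  rcases lt_or_ge a 0 with ha | ha
  · rw [Bi_of_not (by omega), Bi_of_not (by omega)]; ring
  · obtain ⟨A, rfl⟩ : ∃ A : ℕ, a = (A : ℤ) := ⟨a.toNat, (Int.toNat_of_nonneg ha).symm⟩
    rcases lt_or_ge b 0 with hb | hb
    · rw [Bi_of_not (by omega), Bi_of_not (by omega)]; ring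
    · obtain ⟨B, rfl⟩ : ∃ B : ℕ, b = (B : ℤ) := ⟨b.toNat, (Int.toNat_of_nonneg hb).symm⟩
      rcases Nat.eq_zero_or_pos A with h0 | h0
      · subst h0
        have h4 : ((0 : ℕ) : ℤ) - 1 = -1 := by norm_num
        rw [h4, Bi_of_not (show ¬((0:ℤ) ≤ (B:ℤ) ∧ (B:ℤ) ≤ -1) by omega)]
        rcases Nat.eq_zero_or_pos B with hB0 | hB0
        · subst hB0; simp [Bi_nat]
        · rw [Bi_of_not (show ¬((0:ℤ) ≤ (B:ℤ) ∧ (B:ℤ) ≤ ((0:ℕ):ℤ)) by omega)]; ring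
      · rw [show ((A : ℤ)) - 1 = ((A - 1 : ℕ) : ℤ) by omega, Bi_nat, Bi_nat]
        exact natupper A B

lemma Bi_pascal (A : ℕ) (b : ℤ) :
    Bi ((A : ℤ) + 1) b = Bi (A : ℤ) b + Bi (A : ℤ) (b - 1) := by
  rcases lt_or_ge b 0 with hb | hb
  · rw [Bi_of_not (by omega), Bi_of_not (by omega), Bi_of_not (by omega)]; ring
  · rcases eq_or_lt_of_le hb with h0 | h0
    · rw [← h0]
      rw [Bi_of_not (show ¬((0:ℤ) ≤ (0:ℤ) - 1 ∧ (0:ℤ) - 1 ≤ (A:ℤ)) by omega)]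
      rw [show ((A : ℤ) + 1) = ((A + 1 : ℕ) : ℤ) by push_cast; ring]
      rw [show (0 : ℤ) = ((0 : ℕ) : ℤ) by norm_num, Bi_nat, Bi_nat]
      simp
    · obtain ⟨B, rfl⟩ : ∃ B : ℕ, b = (B : ℤ) + 1 := ⟨(b - 1).toNat, by omega⟩
      have e3 : ((B : ℤ) + 1) - 1 = ((B : ℕ) : ℤ) := by ring
      have e1 : ((A : ℤ) + 1) = ((A + 1 : ℕ) : ℤ) := by push_cast; ring
      have e2 : ((B : ℤ) + 1) = ((B + 1 : ℕ) : ℤ) := by push_cast; ring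
      rw [e3, e1, e2, Bi_nat, Bi_nat, Bi_nat]
      have := Nat.choose_succ_succ A B
      push_cast [this]
      ring

lemma Bi_central (k : ℕ) :
    ((k : ℤ) + 1) * Bi (2 * (k : ℤ) + 2) ((k : ℤ) + 1)
      = (4 * (k : ℤ) + 2) * Bi (2 * (k : ℤ)) (k : ℤ) := by
  have e1 : (2 * (k : ℤ) + 2) = ((2 * k + 2 : ℕ) : ℤ) := by push_cast; ring
  have e2 : ((k : ℤ) + 1) = ((k + 1 : ℕ) : ℤ) := by push_cast; ring
  have e3 : (2 * (k : ℤ)) = ((2 * k : ℕ) : ℤ) := by push_cast; ring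
  rw [e1, e2, e3, Bi_nat, Bi_nat]
  have h := Nat.succ_mul_centralBinom_succ k
  simp only [Nat.centralBinom] at h
  rw [show 2 * (k + 1) = 2 * k + 2 by ring] at h
  zify at h
  push_cast at h ⊢
  linarith

/-- The combined summand. -/
def uu (n k : ℕ) : ℤ :=
  (-1) ^ k * Bi (2 * (k : ℤ)) (k : ℤ) *
    (Bi ((n : ℤ) - 1) (k : ℤ) * Bi (k : ℤ) ((n : ℤ) - 1 - (k : ℤ))
      + 12 * Bi ((n : ℤ) - 2) (k : ℤ) * Bi (k : ℤ) ((n : ℤ) - 2 - (k : ℤ))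
      + 16 * Bi ((n : ℤ) - 3) (k : ℤ) * Bi (k : ℤ) ((n : ℤ) - 3 - (k : ℤ)))

/-- The quotient summand. -/
def vv (n k : ℕ) : ℤ :=
  (-1) ^ k * Bi (2 * (k : ℤ)) (k : ℤ) *
    (Bi ((n : ℤ) - 1) (k : ℤ) *
       ((2 * (n : ℤ) ^ 2 - 5 * (n : ℤ) + 5 * (k : ℤ) - 2 * (k : ℤ) ^ 2) * Bi (k : ℤ) ((n : ℤ) - (k : ℤ))
        + ((n : ℤ) ^ 2 - 5 * (k : ℤ) ^ 2) * Bi (k : ℤ) ((n : ℤ) - 1 - (k : ℤ))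
        - 10 * Bi (k : ℤ) ((n : ℤ) - 2 - (k : ℤ))
        + (32 - 8 * (n : ℤ) + (n : ℤ) * (k : ℤ)) * Bi (k : ℤ) ((n : ℤ) - 3 - (k : ℤ))
        + (56 + 16 * (k : ℤ) + 2 * (n : ℤ) - (n : ℤ) ^ 2) * Bi (k : ℤ) ((n : ℤ) - 4 - (k : ℤ)))
     + Bi ((n : ℤ) - 2) (k : ℤ) *
       ((-3 * (k : ℤ)) * Bi (k : ℤ) ((n : ℤ) - 1 - (k : ℤ))
        + 15 * Bi (k : ℤ) ((n : ℤ) - 2 - (k : ℤ))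
        + (-12 - 2 * (k : ℤ) ^ 2) * Bi (k : ℤ) ((n : ℤ) - 3 - (k : ℤ))
        + (-48 - 44 * (k : ℤ) - 4 * (k : ℤ) ^ 2 + 6 * (n : ℤ) * (k : ℤ)) * Bi (k : ℤ) ((n : ℤ) - 4 - (k : ℤ)))
     + Bi ((n : ℤ) - 3) (k : ℤ) * (8 * Bi (k : ℤ) ((n : ℤ) - 3 - (k : ℤ))))

/-- The telescoping term. -/
def HH (n k : ℕ) : ℤ :=
  -((-1) ^ k * (k : ℤ) ^ 2 * Bi (2 * (k : ℤ)) (k : ℤ) * Bi ((n : ℤ) - 1) (k : ℤ) *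
      Bi (k : ℤ) ((n : ℤ) - 1 - (k : ℤ)))

lemma cert (n k : ℕ) :
    uu n k = (n : ℤ) * vv n k + (HH n (k + 1) - HH n k) := by
  have hG := Bi_central k
  have hA := Bi_lower ((n : ℤ) - 1) (k : ℤ)
  have hP : Bi ((k : ℤ) + 1) ((n : ℤ) - 2 - (k : ℤ))
      = Bi (k : ℤ) ((n : ℤ) - 2 - (k : ℤ)) + Bi (k : ℤ) ((n : ℤ) - 3 - (k : ℤ)) := by
    have h := Bi_pascal k ((n : ℤ) - 2 - (k : ℤ))
    rw [show ((n : ℤ) - 2 - (k : ℤ) - 1) = (n : ℤ) - 3 - (k : ℤ) from by ring] at h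
    exact h
  have hRA1 : ((n : ℤ) - 1 - (k : ℤ)) * Bi ((n : ℤ) - 1) (k : ℤ)
      = ((n : ℤ) - 1) * Bi ((n : ℤ) - 2) (k : ℤ) := by
    have h := Bi_upper ((n : ℤ) - 1) (k : ℤ)
    rw [show ((n : ℤ) - 1 - 1) = (n : ℤ) - 2 from by ring] at h
    exact h
  have hRA2 : ((n : ℤ) - 2 - (k : ℤ)) * Bi ((n : ℤ) - 2) (k : ℤ)
      = ((n : ℤ) - 2) * Bi ((n : ℤ) - 3) (k : ℤ) := by
    have h := Bi_upper ((n : ℤ) - 2) (k : ℤ)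
    rw [show ((n : ℤ) - 2 - 1) = (n : ℤ) - 3 from by ring] at h
    exact h
  have hRB0 := Bi_lower (k : ℤ) ((n : ℤ) - 1 - (k : ℤ))
  rw [show ((n : ℤ) - 1 - (k : ℤ) + 1) = (n : ℤ) - (k : ℤ) from by ring] at hRB0
  have hRB1 := Bi_lower (k : ℤ) ((n : ℤ) - 2 - (k : ℤ))
  rw [show ((n : ℤ) - 2 - (k : ℤ) + 1) = (n : ℤ) - 1 - (k : ℤ) from by ring] at hRB1
  have hRB2 := Bi_lower (k : ℤ) ((n : ℤ) - 3 - (k : ℤ))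
  rw [show ((n : ℤ) - 3 - (k : ℤ) + 1) = (n : ℤ) - 2 - (k : ℤ) from by ring] at hRB2
  have hRB3 := Bi_lower (k : ℤ) ((n : ℤ) - 4 - (k : ℤ))
  rw [show ((n : ℤ) - 4 - (k : ℤ) + 1) = (n : ℤ) - 3 - (k : ℤ) from by ring] at hRB3
  have key : ((k : ℤ) + 1) ^ 2 * uu n k
      = ((k : ℤ) + 1) ^ 2 * ((n : ℤ) * vv n k + (HH n (k + 1) - HH n k)) := by
    simp only [uu, vv, HH]
    push_cast
    rw [show (2 * ((k : ℤ) + 1)) = 2 * (k : ℤ) + 2 from by ring,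
        show ((n : ℤ) - 1 - ((k : ℤ) + 1)) = (n : ℤ) - 2 - (k : ℤ) from by ring]
    linear_combination
      ((-1 : ℤ) ^ k * (-(((k : ℤ) + 1) ^ 3)) * Bi ((n : ℤ) - 1) ((k : ℤ) + 1) *
          Bi ((k : ℤ) + 1) ((n : ℤ) - 2 - (k : ℤ))) * hG
      + ((-1 : ℤ) ^ k * (4 * (k : ℤ) + 2) * ((k : ℤ) + 1) ^ 2 * Bi (2 * (k : ℤ)) (k : ℤ) *
          Bi ((k : ℤ) + 1) ((n : ℤ) - 2 - (k : ℤ))) * hA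
      + ((-1 : ℤ) ^ k * (-(4 * (k : ℤ) + 2)) * ((k : ℤ) + 1) ^ 2 * ((n : ℤ) - 1 - (k : ℤ)) *
          Bi (2 * (k : ℤ)) (k : ℤ) * Bi ((n : ℤ) - 1) (k : ℤ)) * hP
      + ((-1 : ℤ) ^ k * ((k : ℤ) + 1) ^ 2 * Bi (2 * (k : ℤ)) (k : ℤ) *
          ((-3 - 3 * (k : ℤ)) * Bi (k : ℤ) ((n : ℤ) - 1 - (k : ℤ))
            + 18 * Bi (k : ℤ) ((n : ℤ) - 2 - (k : ℤ))
            + (-14 - 2 * (k : ℤ) - 2 * (k : ℤ) ^ 2) * Bi (k : ℤ) ((n : ℤ) - 3 - (k : ℤ))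
            + (-64 - 40 * (k : ℤ) - 4 * (k : ℤ) ^ 2 + 6 * (n : ℤ) * (k : ℤ)) *
                Bi (k : ℤ) ((n : ℤ) - 4 - (k : ℤ)))) * hRA1
      + ((-1 : ℤ) ^ k * ((k : ℤ) + 1) ^ 2 * Bi (2 * (k : ℤ)) (k : ℤ) *
          (8 * Bi (k : ℤ) ((n : ℤ) - 3 - (k : ℤ)))) * hRA2
      + ((-1 : ℤ) ^ k * ((k : ℤ) + 1) ^ 2 * Bi (2 * (k : ℤ)) (k : ℤ) *
          ((-5 * (n : ℤ) + 2 * (n : ℤ) * (k : ℤ) + 2 * (n : ℤ) ^ 2) *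
              Bi ((n : ℤ) - 1) (k : ℤ))) * hRB0
      + ((-1 : ℤ) ^ k * ((k : ℤ) + 1) ^ 2 * Bi (2 * (k : ℤ)) (k : ℤ) *
          ((-2 - 4 * (k : ℤ) + 6 * (n : ℤ) + (n : ℤ) * (k : ℤ) - (n : ℤ) ^ 2) *
              Bi ((n : ℤ) - 1) (k : ℤ) + 3 * Bi ((n : ℤ) - 2) (k : ℤ))) * hRB1
      + ((-1 : ℤ) ^ k * ((k : ℤ) + 1) ^ 2 * Bi (2 * (k : ℤ)) (k : ℤ) *
          ((12 + 12 * (k : ℤ) - 6 * (n : ℤ) - 2 * (n : ℤ) * (k : ℤ) + (n : ℤ) ^ 2) *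
              Bi ((n : ℤ) - 1) (k : ℤ) + (-6) * Bi ((n : ℤ) - 2) (k : ℤ))) * hRB2
      + ((-1 : ℤ) ^ k * ((k : ℤ) + 1) ^ 2 * Bi (2 * (k : ℤ)) (k : ℤ) *
          ((-16 - 18 * (k : ℤ) - 2 * (k : ℤ) ^ 2 - 2 * (n : ℤ) + 4 * (n : ℤ) * (k : ℤ) - (n : ℤ) ^ 2) *
              Bi ((n : ℤ) - 1) (k : ℤ) + (16 + 2 * (k : ℤ)) * Bi ((n : ℤ) - 2) (k : ℤ))) * hRB3
  exact mul_left_cancel₀ (by positivity) key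

lemma S_eq (m N : ℕ) (hN : m - 2 ≤ N) :
    S m = ∑ k ∈ Finset.range N,
      (-1) ^ k * Bi (2 * (k : ℤ)) (k : ℤ) * Bi ((m : ℤ) - 3) (k : ℤ) *
        Bi (k : ℤ) ((m : ℤ) - 3 - (k : ℤ)) := by
  unfold S
  have step1 : ∑ k ∈ Finset.range (m - 2),
      (-1) ^ k * ((2 * k).choose k : ℤ) * ((m - 3).choose k : ℤ) * (k.choose (m - k - 3) : ℤ)
      = ∑ k ∈ Finset.range (m - 2),
      (-1) ^ k * Bi (2 * (k : ℤ)) (k : ℤ) * Bi ((m : ℤ) - 3) (k : ℤ) *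
        Bi (k : ℤ) ((m : ℤ) - 3 - (k : ℤ)) := by
    apply Finset.sum_congr rfl
    intro k hk
    have hk' : k < m - 2 := Finset.mem_range.mp hk
    have e1 : Bi (2 * (k : ℤ)) (k : ℤ) = ((2 * k).choose k : ℤ) := by
      rw [show (2 * (k : ℤ)) = ((2 * k : ℕ) : ℤ) from by push_cast; ring]
      exact Bi_nat _ _
    have e2 : Bi ((m : ℤ) - 3) (k : ℤ) = ((m - 3).choose k : ℤ) := by
      rw [show ((m : ℤ) - 3) = ((m - 3 : ℕ) : ℤ) from by omega]
      exact Bi_nat _ _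
    have e3 : Bi (k : ℤ) ((m : ℤ) - 3 - (k : ℤ)) = (k.choose (m - k - 3) : ℤ) := by
      rw [show ((m : ℤ) - 3 - (k : ℤ)) = ((m - k - 3 : ℕ) : ℤ) from by omega]
      exact Bi_nat _ _
    rw [e1, e2, e3]
  rw [step1]
  apply Finset.sum_subset (Finset.range_subset_range.mpr hN)
  intro k hk hk'
  have : ¬((0 : ℤ) ≤ (k : ℤ) ∧ (k : ℤ) ≤ (m : ℤ) - 3) := by
    simp only [Finset.mem_range, not_lt] at hk'
    omega
  rw [Bi_of_not this]
  ring

end Stmt11Aux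

open Stmt11Aux in
theorem stmt_11 (n : ℕ) (hn : 0 < n) :
    (n : ℤ) ∣ S (n + 2) + 12 * S (n + 1) + 16 * S n := by
  have hu : S (n + 2) + 12 * S (n + 1) + 16 * S n = ∑ k ∈ Finset.range (n + 1), uu n k := by
    rw [S_eq (n + 2) (n + 1) (by omega), S_eq (n + 1) (n + 1) (by omega),
        S_eq n (n + 1) (by omega)]
    simp only [Finset.mul_sum, ← Finset.sum_add_distrib]
    apply Finset.sum_congr rfl
    intro k _
    simp only [uu]
    push_cast
    rw [show ((n : ℤ) + 2 - 3) = (n : ℤ) - 1 from by ring,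
        show ((n : ℤ) + 1 - 3) = (n : ℤ) - 2 from by ring]
    ring
  have key : ∑ k ∈ Finset.range (n + 1), uu n k
      = (n : ℤ) * ∑ k ∈ Finset.range (n + 1), vv n k := by
    have t1 : ∑ k ∈ Finset.range (n + 1), uu n k
        = ∑ k ∈ Finset.range (n + 1), ((n : ℤ) * vv n k + (HH n (k + 1) - HH n k)) :=
      Finset.sum_congr rfl fun k _ => cert n k
    rw [t1, Finset.sum_add_distrib, ← Finset.mul_sum, Finset.sum_range_sub (HH n)]
    have hH0 : HH n 0 = 0 := by simp [HH]
    have hHn : HH n (n + 1) = 0 := by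
      unfold HH
      have : Bi ((n : ℤ) - 1) (((n + 1 : ℕ)) : ℤ) = 0 := Bi_of_not (by push_cast; omega)
      rw [this]; ring
    rw [hH0, hHn]; ring
  rw [hu, key]
  exact Dvd.intro _ rfl
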